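/- Let G be a finite simple undirected graph and let p, u, v be distinct vertices that are pairwise non-adjacent. Suppose that κ(p,u) < κ(p,v), that there exists a minimum pu-separator C (i.e., |C| = κ(p,u)) with v ∉ C, and that there exists a minimum uv-separator not containing p. Then κ(u,v) = κ(p,u). -/
import Mathlib


/-- `C` is an `xy`-separator in the simple graph `G`: `x ∉ C`, `y ∉ C`, and every walk in
`G` from `x` to `y` passes through a vertex of `C`. -/
def IsSeparator {V : Type*} (G : SimpleGraph V) (x y : V) (C : Set V) : Prop :=
  x ∉ C ∧ y ∉ C ∧ ∀ w : G.Walk x y, ∃ c ∈ C, c ∈ w.support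

/-- For non-adjacent distinct vertices `x, y`, the vertex connectivity `κ(x,y)`: the
minimum cardinality of an `xy`-separator. -/
noncomputable def vertexConn {V : Type*} (G : SimpleGraph V) (x y : V) : ℕ :=
  sInf {n : ℕ | ∃ C : Set V, IsSeparator G x y C ∧ C.ncard = n}

lemma vertexConn_le {V : Type*} {G : SimpleGraph V} {x y : V} {C : Set V}
    (h : IsSeparator G x y C) : vertexConn G x y ≤ C.ncard :=
  Nat.sInf_le ⟨C, h, rfl⟩

lemma sep_shift {V : Type*} {G : SimpleGraph V} {a b c : V} {C : Set V}
    (hsep : ∀ w : G.Walk a b, ∃ x ∈ C, x ∈ w.support)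
    (w0 : G.Walk c b) (h0 : ∀ x ∈ C, x ∉ w0.support) :
    ∀ w : G.Walk a c, ∃ x ∈ C, x ∈ w.support := by
  intro w
  obtain ⟨x, hxC, hx⟩ := hsep (w.append w0)
  rw [SimpleGraph.Walk.mem_support_append_iff] at hx
  exact ⟨x, hxC, hx.resolve_right (h0 x hxC)⟩

lemma sep_rev {V : Type*} {G : SimpleGraph V} {a b : V} {C : Set V}
    (hsep : ∀ w : G.Walk a b, ∃ x ∈ C, x ∈ w.support) :
    ∀ w : G.Walk b a, ∃ x ∈ C, x ∈ w.support := by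
  intro w
  obtain ⟨x, hxC, hx⟩ := hsep w.reverse
  rw [SimpleGraph.Walk.support_reverse, List.mem_reverse] at hx
  exact ⟨x, hxC, hx⟩

/-- Let `p, u, v` be distinct, pairwise non-adjacent vertices of a finite
simple graph `G`. Suppose `κ(p,u) < κ(p,v)`, some minimum `pu`-separator avoids `v`, and
some minimum `uv`-separator avoids `p`. Then `κ(u,v) = κ(p,u)`. -/
theorem maxflow_determined_strict {V : Type*} [Fintype V]
    (G : SimpleGraph V) (p u v : V)
    (hpu : p ≠ u) (hpv : p ≠ v) (huv : u ≠ v)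
    (hapu : ¬ G.Adj p u) (hapv : ¬ G.Adj p v) (hauv : ¬ G.Adj u v)
    (hlt : vertexConn G p u < vertexConn G p v)
    (hCpu : ∃ C : Set V, IsSeparator G p u C ∧ C.ncard = vertexConn G p u ∧ v ∉ C)
    (hCuv : ∃ C : Set V, IsSeparator G u v C ∧ C.ncard = vertexConn G u v ∧ p ∉ C) :
    vertexConn G u v = vertexConn G p u := by
  obtain ⟨C, ⟨hpC, huC, hCsep⟩, hCcard, hvC⟩ := hCpu
  obtain ⟨D, ⟨huD, hvD, hDsep⟩, hDcard, hpD⟩ := hCuv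
  -- C separates u and v
  have hCuv' : IsSeparator G u v C := by
    refine ⟨huC, hvC, ?_⟩
    by_contra h
    push_neg at h
    obtain ⟨w0, hw0⟩ := h
    -- then C separates p and v
    have : IsSeparator G p v C :=
      ⟨hpC, hvC, sep_shift hCsep w0.reverse (by
        intro x hx hmem
        rw [SimpleGraph.Walk.support_reverse, List.mem_reverse] at hmem
        exact hw0 x hx hmem)⟩
    have := vertexConn_le this
    rw [hCcard] at this
    omega
  have h1 : vertexConn G u v ≤ vertexConn G p u := by
    have := vertexConn_le hCuv'
    omega
  -- D separates p and u
  have hDpu : IsSeparator G p u D := by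
    refine ⟨hpD, huD, ?_⟩
    by_contra h
    push_neg at h
    obtain ⟨w0, hw0⟩ := h
    -- then D separates v and p, hence p and v
    have hDvp : ∀ w : G.Walk v p, ∃ x ∈ D, x ∈ w.support :=
      sep_shift (b := u) (sep_rev hDsep) w0 hw0
    have : IsSeparator G p v D := ⟨hpD, hvD, sep_rev hDvp⟩
    have := vertexConn_le this
    rw [hDcard] at this
    omega
  have h2 : vertexConn G p u ≤ vertexConn G u v := by
    have := vertexConn_le hDpu
    omega
  omega
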